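/- Let $A$ be a finite subset of a group $G$ and let $k > 2$ be an integer. Then $|A_k|/|A| \leq (|A_3|/|A|)^{k-2}$, where $A_m$ denotes the set of products $g_1 g_2 \cdots g_m$ with each $g_i \in A \cup A^{-1} \cup \{1\}$. -/

import Mathlib

open scoped Pointwise

open Finset in
private lemma step_aux {G : Type*} [Group G] [DecidableEq G] (FA F : Finset G)
    (hsub : FA ⊆ F) (hsymm : F⁻¹ = F) (m : ℕ) :
    #(F ^ (m + 3)) * #FA ≤ #(F ^ (m + 2)) * #(F ^ 3) := by
  have h1 : F ^ (m + 3) = F ^ (m + 1) * F ^ 2 := by rw [← pow_add]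
  have h2 := Finset.ruzsa_triangle_inequality_mul_mul_invMul (F ^ (m + 1)) FA (F ^ 2)
  rw [h1]
  refine h2.trans (Nat.mul_le_mul ?_ ?_)
  · refine Finset.card_le_card ?_
    have : F ^ (m + 1) * FA ⊆ F ^ (m + 1) * F ^ 1 := by
      refine Finset.mul_subset_mul_left ?_
      simpa using hsub
    refine this.trans ?_
    rw [← pow_add]
  · refine Finset.card_le_card ?_
    have hinv : (F ^ 2)⁻¹ = F ^ 2 := by rw [← inv_pow, hsymm]
    rw [hinv]
    have : F ^ 2 * FA ⊆ F ^ 2 * F ^ 1 := by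
      refine Finset.mul_subset_mul_left ?_
      simpa using hsub
    refine this.trans ?_
    rw [← pow_add]

open Finset in
private lemma main_aux {G : Type*} [Group G] [DecidableEq G] (FA F : Finset G)
    (hsub : FA ⊆ F) (hsymm : F⁻¹ = F) (hne : FA.Nonempty) (m : ℕ) :
    (#(F ^ (m + 3)) : ℝ) / #FA ≤ ((#(F ^ 3) : ℝ) / #FA) ^ (m + 1) := by
  have hpos : (0 : ℝ) < #FA := by exact_mod_cast hne.card_pos
  induction m with
  | zero => simp
  | succ n ih =>
    have hstep := step_aux FA F hsub hsymm (n + 1)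
    have hstep' : (#(F ^ (n + 1 + 3)) : ℝ) * #FA ≤ #(F ^ (n + 3)) * #(F ^ 3) := by
      exact_mod_cast hstep
    rw [pow_succ]
    calc (#(F ^ (n + 1 + 3)) : ℝ) / #FA
        = (#(F ^ (n + 1 + 3)) : ℝ) * #FA / (#FA * #FA) := by
          field_simp
      _ ≤ (#(F ^ (n + 3)) : ℝ) * #(F ^ 3) / (#FA * #FA) := by
          exact div_le_div_of_nonneg_right hstep' (by positivity)
      _ = ((#(F ^ (n + 3)) : ℝ) / #FA) * ((#(F ^ 3) : ℝ) / #FA) := by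
          ring
      _ ≤ ((#(F ^ 3) : ℝ) / #FA) ^ (n + 1) * ((#(F ^ 3) : ℝ) / #FA) := by
          exact mul_le_mul_of_nonneg_right ih (by positivity)

theorem stmt_0 {G : Type*} [Group G] (A : Set G) (hA : A.Finite) (hne : A.Nonempty)
    (k : ℕ) (hk : 2 < k) :
    (((A ∪ A⁻¹ ∪ {1} : Set G) ^ k).ncard : ℝ) / (A.ncard : ℝ) ≤
      ((((A ∪ A⁻¹ ∪ {1} : Set G) ^ 3).ncard : ℝ) / (A.ncard : ℝ)) ^ (k - 2) := by
  classical
  have hS : (A ∪ A⁻¹ ∪ {1} : Set G).Finite := (hA.union hA.inv).union (Set.finite_singleton 1)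
  set F : Finset G := hS.toFinset with hF
  set FA : Finset G := hA.toFinset with hFA
  have hcoeF : (F : Set G) = A ∪ A⁻¹ ∪ {1} := hS.coe_toFinset
  have hcoeA : (FA : Set G) = A := hA.coe_toFinset
  have hsub : FA ⊆ F := by
    rw [← Finset.coe_subset, hcoeF, hcoeA]
    exact fun x hx => Or.inl (Or.inl hx)
  have hfne : FA.Nonempty := by
    rwa [← Finset.coe_nonempty, hcoeA]
  have hsymm : F⁻¹ = F := by
    apply Finset.coe_injective
    rw [Finset.coe_inv, hcoeF]
    ext x
    simp only [Set.mem_inv, Set.mem_union, Set.mem_singleton_iff, inv_inv, inv_eq_one]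
    tauto
  have hcard : ∀ n : ℕ, ((A ∪ A⁻¹ ∪ {1} : Set G) ^ n).ncard = (F ^ n).card := by
    intro n
    rw [← hcoeF, ← Finset.coe_pow, Set.ncard_coe_finset]
  have hcardA : A.ncard = FA.card := by rw [← hcoeA, Set.ncard_coe_finset]
  obtain ⟨m, rfl⟩ := Nat.exists_eq_add_of_le (show 3 ≤ k by omega)
  have h1 : 3 + m = m + 3 := by omega
  have h2 : 3 + m - 2 = m + 1 := by omega
  rw [hcard, hcard, hcardA, h2, h1]
  exact main_aux FA F hsub hsymm hfne m
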